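/- Let {D_n} be a system of Dedekind domains with limit D and let M be a maximal ideal of D. Then the localization D_M is a discrete valuation ring if and only if there exists n such that M ∩ D_n ⊄ (M ∩ D_j)² for all j ≥ n. -/

import Mathlib

set_option synthInstance.maxHeartbeats 1000000

noncomputable section

/-- A *system of Dedekind domains* inside a field `K`: a strictly increasing chain
`D 0 ⊊ D 1 ⊊ ⋯` of subrings of `K` such that each `D n` is a Dedekind domain which is
not a field, every maximal ideal of `D i` survives (generates a proper ideal) in `D j`
for `i < j`, and every maximal ideal of `D j` contracts to a maximal ideal of `D 0`. -/
structure DedekindSystem (K : Type*) [Field K] where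
  D : ℕ → Subring K
  strictMono : StrictMono D
  dedekind : ∀ n, IsDedekindDomain (D n)
  not_field : ∀ n, ¬ IsField (D n)
  survives : ∀ i j (hij : i < j) (M : Ideal (D i)), M.IsMaximal →
    Ideal.map (Subring.inclusion (strictMono.monotone hij.le)) M ≠ ⊤
  contracts : ∀ j (M : Ideal (D j)), M.IsMaximal →
    (Ideal.comap (Subring.inclusion (strictMono.monotone (Nat.zero_le j))) M).IsMaximal

/-- The limit `D = ⋃ₙ Dₙ` of a system of Dedekind domains. -/
def DedekindSystem.limit {K : Type*} [Field K] (S : DedekindSystem K) : Subring K :=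
  ⨆ n, S.D n


theorem DedekindSystem.le_limit {K : Type*} [Field K] (S : DedekindSystem K) (n : ℕ) :
    S.D n ≤ S.limit :=
  le_iSup S.D n

/-- A discrete valuation ring: a local principal ideal domain that is not a field. -/
def IsDVR (R : Type*) [CommRing R] : Prop :=
  IsDomain R ∧ IsPrincipalIdealRing R ∧ IsLocalRing R ∧ ¬ IsField R

namespace DSysAux

variable {K : Type*} [Field K]

theorem incl_injective {A B : Subring K} (h : A ≤ B) :
    Function.Injective (Subring.inclusion h) := by
  intro a b hab
  have := congrArg (Subtype.val : B → K) hab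
  exact Subtype.ext this

theorem incl_comp {A B C : Subring K} (h1 : A ≤ B) (h2 : B ≤ C) :
    (Subring.inclusion h2).comp (Subring.inclusion h1) = Subring.inclusion (h1.trans h2) :=
  RingHom.ext fun _ => rfl

theorem comap_incl_incl {A B C : Subring K} (h1 : A ≤ B) (h2 : B ≤ C) (I : Ideal C) :
    Ideal.comap (Subring.inclusion h1) (Ideal.comap (Subring.inclusion h2) I) =
      Ideal.comap (Subring.inclusion (h1.trans h2)) I := by
  rw [Ideal.comap_comap, incl_comp]

theorem isDVR_of_equiv {A B : Type*} [CommRing A] [CommRing B] (e : A ≃+* B) (h : IsDVR A) :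
    IsDVR B := by
  obtain ⟨h1, h2, h3, h4⟩ := h
  haveI := h1; haveI := h2; haveI := h3
  refine ⟨Function.Injective.isDomain e.symm.toRingHom e.symm.injective,
    IsPrincipalIdealRing.of_surjective e.toRingHom e.surjective, ?_, ?_⟩
  · haveI : Nontrivial B := e.symm.toEquiv.nontrivial
    exact IsLocalRing.of_surjective' e.toRingHom e.surjective
  · intro hB
    apply h4
    haveI : Nontrivial B := ⟨hB.exists_pair_ne⟩
    refine ⟨⟨e.symm 1, e.symm 0, fun h10 => ?_⟩, mul_comm, fun {a} ha => ?_⟩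
    · have : (1 : B) = 0 := by simpa using congrArg e h10
      exact one_ne_zero this
    · obtain ⟨b, hb⟩ := hB.3 (a := e a) (fun h' => ha (by simpa using congrArg e.symm h'))
      refine ⟨e.symm b, ?_⟩
      have := congrArg e.symm hb
      simpa using this

/-- The localization of a subring `R` of a field `K` at a prime `P`, as a subring of `K`. -/
def locAt (R : Subring K) (P : Ideal R) (hP : P.IsPrime) : Subring K where
  carrier := {x | ∃ a b : R, b ∉ P ∧ x * (b : K) = a}
  one_mem' := ⟨1, 1, fun h => hP.ne_top (P.eq_top_iff_one.mpr h), by simp⟩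
  zero_mem' := ⟨0, 1, fun h => hP.ne_top (P.eq_top_iff_one.mpr h), by simp⟩
  mul_mem' := by
    rintro x y ⟨a, b, hb, hx⟩ ⟨c, d, hd, hy⟩
    refine ⟨a * c, b * d, fun h => ((hP.mem_or_mem h).elim hb hd), ?_⟩
    push_cast
    rw [show x * y * (b * d : K) = (x * b) * (y * d) by ring, hx, hy]
  add_mem' := by
    rintro x y ⟨a, b, hb, hx⟩ ⟨c, d, hd, hy⟩
    refine ⟨a * d + c * b, b * d, fun h => ((hP.mem_or_mem h).elim hb hd), ?_⟩
    push_cast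
    rw [show (x + y) * (b * d : K) = (x * b) * d + (y * d) * b by ring, hx, hy]
  neg_mem' := by
    rintro x ⟨a, b, hb, hx⟩
    exact ⟨-a, b, hb, by push_cast; rw [neg_mul, hx]⟩

theorem le_locAt (R : Subring K) (P : Ideal R) (hP : P.IsPrime) : R ≤ locAt R P hP :=
  fun x hx => ⟨⟨x, hx⟩, 1, fun h => hP.ne_top (P.eq_top_iff_one.mpr h), by simp⟩

theorem not_mem_prime_ne_zero {R : Subring K} {P : Ideal R} (hP : P.IsPrime) {b : R}
    (hb : b ∉ P) : (b : K) ≠ 0 := by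
  intro h
  exact hb (by simpa [show b = 0 from Subtype.ext h] using P.zero_mem)

def locAlg (R : Subring K) (P : Ideal R) (hP : P.IsPrime) : Algebra R (locAt R P hP) :=
  (Subring.inclusion (le_locAt R P hP)).toAlgebra

theorem isLocalization (R : Subring K) (P : Ideal R) (hP : P.IsPrime) :
    letI := locAlg R P hP
    IsLocalization P.primeCompl (locAt R P hP) := by
  letI := locAlg R P hP
  constructor; constructor
  · rintro ⟨s, hs⟩
    have hs0 : (s : K) ≠ 0 := not_mem_prime_ne_zero hP hs
    refine IsUnit.of_mul_eq_one ⟨(s : K)⁻¹, ⟨1, s, hs, by field_simp; rfl⟩⟩ ?_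
    ext
    simp only [Subring.coe_mul, Subring.coe_one]
    change (s : K) * (s : K)⁻¹ = 1
    field_simp
  · rintro ⟨z, a, b, hb, hz⟩
    refine ⟨⟨a, ⟨b, hb⟩⟩, ?_⟩
    ext
    exact hz
  · intro x y h
    refine ⟨1, ?_⟩
    have h2 : ((x : K)) = (y : K) := congrArg (fun z : locAt R P hP => (z : K)) h
    have : x = y := Subtype.ext h2
    simp [this]

section System

variable (S : DedekindSystem K) (M : Ideal S.limit) (hM : M.IsMaximal)

def Mn (n : ℕ) : Ideal (S.D n) := Ideal.comap (Subring.inclusion (S.le_limit n)) M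

theorem Mn_compat {n j : ℕ} (h : n ≤ j) :
    Ideal.comap (Subring.inclusion (S.strictMono.monotone h)) (Mn S M j) = Mn S M n :=
  comap_incl_incl _ _ M

theorem mem_limit_iff {x : K} : x ∈ S.limit ↔ ∃ n, x ∈ S.D n := by
  unfold DedekindSystem.limit
  exact Subring.mem_iSup_of_directed S.strictMono.monotone.directed_le

include hM

theorem Mn_prime (n : ℕ) : (Mn S M n).IsPrime := by
  haveI := hM.isPrime
  exact Ideal.IsPrime.comap _

theorem M_ne_bot : M ≠ ⊥ := by
  intro h0
  letI := S.dedekind 0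
  obtain ⟨N, hN⟩ := Ideal.exists_maximal (S.D 0)
  have hNbot : N ≠ ⊥ := Ring.ne_bot_of_isMaximal_of_not_isField hN (S.not_field 0)
  obtain ⟨x, hxN, hx0⟩ := (Submodule.ne_bot_iff N).mp hNbot
  set y : S.limit := Subring.inclusion (S.le_limit 0) x with hy
  have hy0 : y ≠ 0 := by
    intro h
    apply hx0
    apply incl_injective (S.le_limit 0)
    rw [map_zero]
    exact h
  have hyU : IsUnit y := by
    by_contra hyU
    have h1 : (⊥ : Ideal S.limit) < Ideal.span {y} := by
      rw [bot_lt_iff_ne_bot]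
      intro h
      exact hy0 (Ideal.span_singleton_eq_bot.mp h)
    have h2 := hM.1.2 _ (h0 ▸ h1)
    exact hyU (Ideal.span_singleton_eq_top.mp h2)
  obtain ⟨z, hz⟩ := hyU.exists_right_inv
  obtain ⟨j, hj⟩ := (mem_limit_iff S).mp z.2
  apply S.survives 0 (j + 1) (Nat.succ_pos j) N hN
  rw [Ideal.eq_top_iff_one]
  have hmem : Subring.inclusion (S.strictMono.monotone (Nat.succ_pos j).le) x ∈
      Ideal.map (Subring.inclusion (S.strictMono.monotone (Nat.succ_pos j).le)) N :=
    Ideal.mem_map_of_mem _ hxN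
  have hjz : (z : K) ∈ S.D (j + 1) := S.strictMono.monotone (Nat.le_succ j) hj
  have h1K : (x : K) * (z : K) = 1 := by
    have := congrArg (Subtype.val : S.limit → K) hz
    exact this
  have hone : (1 : S.D (j + 1)) =
      Subring.inclusion (S.strictMono.monotone (Nat.succ_pos j).le) x * ⟨(z : K), hjz⟩ := by
    apply Subtype.ext
    simpa using h1K.symm
  rw [hone]
  exact Ideal.mul_mem_right _ _ hmem

theorem M0_isMaximal : (Mn S M 0).IsMaximal := by
  obtain ⟨x, hxM, hx0⟩ := (Submodule.ne_bot_iff M).mp (M_ne_bot S M hM)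
  obtain ⟨m, hm⟩ := (mem_limit_iff S).mp x.2
  letI := S.dedekind m
  have hne : Mn S M m ≠ ⊥ := by
    intro hb
    have hx' : (⟨(x : K), hm⟩ : S.D m) ∈ Mn S M m := by
      show Subring.inclusion (S.le_limit m) ⟨(x : K), hm⟩ ∈ M
      have : Subring.inclusion (S.le_limit m) (⟨(x : K), hm⟩ : S.D m) = x := Subtype.ext rfl
      rwa [this]
    rw [hb] at hx'
    have : (⟨(x : K), hm⟩ : S.D m) = 0 := hx'
    have hv : (x : K) = 0 := congrArg Subtype.val this
    exact hx0 (Subtype.ext hv)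
  have hmax : (Mn S M m).IsMaximal := Ideal.IsPrime.isMaximal (Mn_prime S M hM m) hne
  have := S.contracts m _ hmax
  rwa [Mn_compat S M (Nat.zero_le m)] at this

theorem Mn_ne_bot (n : ℕ) : Mn S M n ≠ ⊥ := by
  intro hb
  have h0 : Mn S M 0 = ⊥ := by
    rw [← Mn_compat S M (Nat.zero_le n), hb, Ideal.comap_bot_of_injective (Subring.inclusion (S.strictMono.monotone (Nat.zero_le n))) (incl_injective _)]
  letI := S.dedekind 0
  exact Ring.ne_bot_of_isMaximal_of_not_isField (M0_isMaximal S M hM) (S.not_field 0) h0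

theorem Mn_isMaximal (n : ℕ) : (Mn S M n).IsMaximal := by
  letI := S.dedekind n
  exact Ideal.IsPrime.isMaximal (Mn_prime S M hM n) (Mn_ne_bot S M hM n)

abbrev Vr (n : ℕ) : Subring K := locAt (S.D n) (Mn S M n) (Mn_prime S M hM n)

def Vl : Subring K := locAt S.limit M hM.isPrime

theorem Vr_mono {n j : ℕ} (h : n ≤ j) : Vr S M hM n ≤ Vr S M hM j := by
  rintro x ⟨a, b, hb, hx⟩
  refine ⟨Subring.inclusion (S.strictMono.monotone h) a,
    Subring.inclusion (S.strictMono.monotone h) b, ?_, hx⟩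
  intro hbj
  apply hb
  rw [← Mn_compat S M h]
  exact hbj

theorem Vr_le_Vl (n : ℕ) : Vr S M hM n ≤ Vl S M hM := by
  rintro x ⟨a, b, hb, hx⟩
  exact ⟨Subring.inclusion (S.le_limit n) a, Subring.inclusion (S.le_limit n) b,
    fun hbM => hb hbM, hx⟩

theorem exists_Vr_mem {x : K} (hx : x ∈ Vl S M hM) (m : ℕ) :
    ∃ n, m ≤ n ∧ x ∈ Vr S M hM n := by
  obtain ⟨a, b, hb, hx⟩ := hx
  obtain ⟨p, hp⟩ := (mem_limit_iff S).mp a.2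
  obtain ⟨q, hq⟩ := (mem_limit_iff S).mp b.2
  have hpn : p ≤ max m (max p q) := le_trans (le_max_left p q) (le_max_right m _)
  have hqn : q ≤ max m (max p q) := le_trans (le_max_right p q) (le_max_right m _)
  refine ⟨max m (max p q), le_max_left _ _,
    ⟨⟨(a : K), S.strictMono.monotone hpn hp⟩, ⟨(b : K), S.strictMono.monotone hqn hq⟩, ?_, hx⟩⟩
  intro hbn
  apply hb
  have heq : Subring.inclusion (S.le_limit (max m (max p q)))
      (⟨(b : K), S.strictMono.monotone hqn hq⟩ : S.D (max m (max p q))) = b := Subtype.ext rfl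
  show b ∈ M
  rw [← heq]
  exact hbn

def mVr (n : ℕ) : Ideal (Vr S M hM n) :=
  Ideal.map (Subring.inclusion (le_locAt (S.D n) (Mn S M n) (Mn_prime S M hM n))) (Mn S M n)

theorem dvr_Vr (n : ℕ) : IsDiscreteValuationRing (Vr S M hM n) := by
  letI := S.dedekind n
  letI : Algebra (S.D n) (Vr S M hM n) := locAlg (S.D n) (Mn S M n) (Mn_prime S M hM n)
  haveI : (Mn S M n).IsPrime := Mn_prime S M hM n
  haveI : IsLocalization (Mn S M n).primeCompl (Vr S M hM n) := isLocalization (S.D n) (Mn S M n) (Mn_prime S M hM n)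
  exact IsLocalization.AtPrime.isDiscreteValuationRing_of_dedekind_domain (S.D n)
    (Mn_ne_bot S M hM n) (Vr S M hM n)

theorem mVr_eq_max (n : ℕ) [inst : IsLocalRing (Vr S M hM n)] :
    mVr S M hM n = IsLocalRing.maximalIdeal (Vr S M hM n) := by
  letI : Algebra (S.D n) (Vr S M hM n) := locAlg (S.D n) (Mn S M n) (Mn_prime S M hM n)
  haveI : (Mn S M n).IsPrime := Mn_prime S M hM n
  haveI : IsLocalization (Mn S M n).primeCompl (Vr S M hM n) := isLocalization (S.D n) (Mn S M n) (Mn_prime S M hM n)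
  have halg : Subring.inclusion (le_locAt (S.D n) (Mn S M n) (Mn_prime S M hM n)) =
      algebraMap (S.D n) (Vr S M hM n) := rfl
  rw [mVr, halg]
  have hc := IsLocalization.AtPrime.comap_maximalIdeal (Vr S M hM n) (Mn S M n)
  exact (congrArg (Ideal.map (algebraMap (S.D n) (Vr S M hM n))) hc.symm).trans
    (IsLocalization.map_comap (Mn S M n).primeCompl (Vr S M hM n) _)

theorem mem_mVr_of_not_isUnit (n : ℕ) {x : Vr S M hM n} (hx : ¬ IsUnit x) :
    x ∈ mVr S M hM n := by
  haveI := dvr_Vr S M hM n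
  rw [mVr_eq_max S M hM n]
  exact hx

theorem not_isUnit_of_mem_mVr (n : ℕ) {x : Vr S M hM n} (hx : x ∈ mVr S M hM n) :
    ¬ IsUnit x := by
  haveI := dvr_Vr S M hM n
  rw [mVr_eq_max S M hM n] at hx
  exact hx

theorem mem_mVr_sq_iff (n : ℕ) {y : S.D n} :
    Subring.inclusion (le_locAt (S.D n) (Mn S M n) (Mn_prime S M hM n)) y ∈ (mVr S M hM n) ^ 2 ↔
      y ∈ (Mn S M n) ^ 2 := by
  letI := S.dedekind n
  letI : Algebra (S.D n) (Vr S M hM n) := locAlg (S.D n) (Mn S M n) (Mn_prime S M hM n)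
  haveI : (Mn S M n).IsPrime := Mn_prime S M hM n
  haveI : IsLocalization (Mn S M n).primeCompl (Vr S M hM n) := isLocalization (S.D n) (Mn S M n) (Mn_prime S M hM n)
  have halg : Subring.inclusion (le_locAt (S.D n) (Mn S M n) (Mn_prime S M hM n)) =
      algebraMap (S.D n) (Vr S M hM n) := rfl
  have hsq : (mVr S M hM n) ^ 2 =
      Ideal.map (algebraMap (S.D n) (Vr S M hM n)) ((Mn S M n) ^ 2) := by
    rw [Ideal.map_pow, mVr, halg]
  constructor
  · intro h
    rw [halg] at h
    rw [hsq] at h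
    obtain ⟨⟨a, t⟩, heq⟩ :=
      (IsLocalization.mem_map_algebraMap_iff (Mn S M n).primeCompl (Vr S M hM n)).mp h
    have hinj : Function.Injective (algebraMap (S.D n) (Vr S M hM n)) := by
      rw [← halg]; exact incl_injective _
    have hmul : y * (t : S.D n) = a := hinj (by rw [map_mul]; exact heq)
    have hys : y * (t : S.D n) ∈ (Mn S M n) ^ 2 := hmul ▸ a.2
    have hprimary : ((Mn S M n) ^ 2).IsPrimary := by
      apply Ideal.isPrimary_of_isMaximal_radical
      rw [Ideal.radical_pow _ two_ne_zero, (Mn_prime S M hM n).radical]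
      exact Mn_isMaximal S M hM n
    rcases (Ideal.isPrimary_iff.mp hprimary).2 hys with hy | ht
    · exact hy
    · exfalso
      apply t.2
      rwa [Ideal.radical_pow _ two_ne_zero, (Mn_prime S M hM n).radical] at ht
  · intro h
    have : algebraMap (S.D n) (Vr S M hM n) y ∈
        Ideal.map (algebraMap (S.D n) (Vr S M hM n)) ((Mn S M n) ^ 2) :=
      Ideal.mem_map_of_mem _ h
    rw [← hsq] at this
    rwa [halg]

theorem mVr_map_le {n j : ℕ} (h : n ≤ j) :
    Ideal.map (Subring.inclusion (Vr_mono S M hM h)) (mVr S M hM n) ≤ mVr S M hM j := by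
  have h1 : Ideal.map (Subring.inclusion (S.strictMono.monotone h)) (Mn S M n) ≤ Mn S M j := by
    rw [Ideal.map_le_iff_le_comap, Mn_compat S M h]
  rw [mVr, Ideal.map_map, incl_comp, ← incl_comp (S.strictMono.monotone h)
    (le_locAt (S.D j) (Mn S M j) (Mn_prime S M hM j)), ← Ideal.map_map, mVr]
  exact Ideal.map_mono h1

theorem mVr_map_le_sq {n j : ℕ} (h : n ≤ j)
    (hsq : Ideal.map (Subring.inclusion (S.strictMono.monotone h)) (Mn S M n) ≤ (Mn S M j) ^ 2) :
    Ideal.map (Subring.inclusion (Vr_mono S M hM h)) (mVr S M hM n) ≤ (mVr S M hM j) ^ 2 := by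
  rw [mVr, Ideal.map_map, incl_comp, ← incl_comp (S.strictMono.monotone h)
    (le_locAt (S.D j) (Mn S M j) (Mn_prime S M hM j)), ← Ideal.map_map]
  have h2 := Ideal.map_mono
    (f := Subring.inclusion (le_locAt (S.D j) (Mn S M j) (Mn_prime S M hM j))) hsq
  rw [Ideal.map_pow] at h2
  exact h2

theorem exists_unif (n : ℕ) :
    ∃ π : Vr S M hM n, Irreducible π ∧ mVr S M hM n = Ideal.span {π} := by
  haveI := dvr_Vr S M hM n
  obtain ⟨π, hπ⟩ := IsDiscreteValuationRing.exists_irreducible (Vr S M hM n)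
  exact ⟨π, hπ, by rw [mVr_eq_max S M hM n, hπ.maximalIdeal_eq]⟩

theorem irreducible_of_mem_not_sq (n : ℕ) {x : Vr S M hM n} (h1 : x ∈ mVr S M hM n)
    (h2 : x ∉ (mVr S M hM n) ^ 2) : Irreducible x := by
  obtain ⟨π, hπ, hspan⟩ := exists_unif S M hM n
  rw [hspan, Ideal.mem_span_singleton] at h1
  obtain ⟨c, hc⟩ := h1
  have hcu : IsUnit c := by
    by_contra hcu
    apply h2
    have hc' := mem_mVr_of_not_isUnit S M hM n hcu
    rw [hspan, Ideal.mem_span_singleton] at hc'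
    obtain ⟨d, hd⟩ := hc'
    rw [hspan, Ideal.span_singleton_pow, Ideal.mem_span_singleton]
    exact ⟨d, by rw [hc, hd]; ring⟩
  have hassoc : Associated π x := ⟨hcu.unit, by rw [IsUnit.unit_spec]; exact hc.symm⟩
  exact hassoc.irreducible hπ

theorem not_isUnit_Vl {n : ℕ} {x : Vr S M hM n} (hx : x ∈ mVr S M hM n) :
    ¬ IsUnit (Subring.inclusion (Vr_le_Vl S M hM n) x) := by
  intro hu
  obtain ⟨z, hz⟩ := hu.exists_right_inv
  obtain ⟨l, hl, hzl⟩ := exists_Vr_mem S M hM z.2 n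
  have hx' : Subring.inclusion (Vr_mono S M hM hl) x ∈ mVr S M hM l :=
    mVr_map_le S M hM hl (Ideal.mem_map_of_mem _ hx)
  apply not_isUnit_of_mem_mVr S M hM l hx'
  refine IsUnit.of_mul_eq_one ⟨(z : K), hzl⟩ ?_
  apply Subtype.ext
  have := congrArg (Subtype.val : Vl S M hM → K) hz
  simpa using this

theorem dvr_Vl (n : ℕ)
    (h : ∀ j (hnj : n ≤ j), ¬ (Ideal.map (Subring.inclusion (S.strictMono.monotone hnj))
      (Mn S M n) ≤ (Mn S M j) ^ 2)) :
    IsDiscreteValuationRing (Vl S M hM) := by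
  apply IsDiscreteValuationRing.ofHasUnitMulPowIrreducibleFactorization
  obtain ⟨π, hπ_irr, hπ_span⟩ := exists_unif S M hM n
  have hπ_mem : π ∈ mVr S M hM n := hπ_span ▸ Ideal.mem_span_singleton_self π
  have key : ∀ j (hnj : n ≤ j), Irreducible (Subring.inclusion (Vr_mono S M hM hnj) π) := by
    intro j hnj
    have hq_mem : Subring.inclusion (Vr_mono S M hM hnj) π ∈ mVr S M hM j :=
      mVr_map_le S M hM hnj (Ideal.mem_map_of_mem _ hπ_mem)
    have hq_not_sq : Subring.inclusion (Vr_mono S M hM hnj) π ∉ (mVr S M hM j) ^ 2 := by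
      intro hq2
      apply h j hnj
      rw [Ideal.map_le_iff_le_comap]
      intro y hy
      rw [Ideal.mem_comap, ← mem_mVr_sq_iff S M hM j]
      have hy' : Subring.inclusion (le_locAt (S.D n) (Mn S M n) (Mn_prime S M hM n)) y ∈
          mVr S M hM n := Ideal.mem_map_of_mem _ hy
      rw [hπ_span, Ideal.mem_span_singleton] at hy'
      obtain ⟨c, hc⟩ := hy'
      have heq : Subring.inclusion (le_locAt (S.D j) (Mn S M j) (Mn_prime S M hM j))
          (Subring.inclusion (S.strictMono.monotone hnj) y) =
          Subring.inclusion (Vr_mono S M hM hnj) π *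
            Subring.inclusion (Vr_mono S M hM hnj) c := by
        apply Subtype.ext
        have := congrArg (Subtype.val : Vr S M hM n → K) hc
        simpa using this
      rw [heq]
      exact Ideal.mul_mem_right _ _ hq2
    exact irreducible_of_mem_not_sq S M hM j hq_mem hq_not_sq
  have hp_irr : Irreducible (Subring.inclusion (Vr_le_Vl S M hM n) π) := by
    constructor
    · exact not_isUnit_Vl S M hM hπ_mem
    · intro a b hab
      obtain ⟨la, hla, ha⟩ := exists_Vr_mem S M hM a.2 n
      obtain ⟨lb, hlb, hb⟩ := exists_Vr_mem S M hM b.2 la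
      have hnlb : n ≤ lb := le_trans hla hlb
      have ha' : (a : K) ∈ Vr S M hM lb := Vr_mono S M hM hlb ha
      have heq : Subring.inclusion (Vr_mono S M hM hnlb) π =
          (⟨(a : K), ha'⟩ : Vr S M hM lb) * ⟨(b : K), hb⟩ := by
        apply Subtype.ext
        have := congrArg (Subtype.val : Vl S M hM → K) hab
        simpa using this
      rcases (key lb hnlb).isUnit_or_isUnit heq with hu | hu
      · left
        have := hu.map (Subring.inclusion (Vr_le_Vl S M hM lb))
        rwa [show Subring.inclusion (Vr_le_Vl S M hM lb) (⟨(a : K), ha'⟩ : Vr S M hM lb) = a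
          from Subtype.ext rfl] at this
      · right
        have := hu.map (Subring.inclusion (Vr_le_Vl S M hM lb))
        rwa [show Subring.inclusion (Vr_le_Vl S M hM lb) (⟨(b : K), hb⟩ : Vr S M hM lb) = b
          from Subtype.ext rfl] at this
  refine ⟨Subring.inclusion (Vr_le_Vl S M hM n) π, hp_irr, ?_⟩
  intro x hx
  obtain ⟨l, hl, hxl⟩ := exists_Vr_mem S M hM x.2 n
  have hx'0 : (⟨(x : K), hxl⟩ : Vr S M hM l) ≠ 0 := by
    intro h0
    apply hx
    have hv : (x : K) = 0 := congrArg Subtype.val h0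
    exact Subtype.ext hv
  haveI := dvr_Vr S M hM l
  obtain ⟨k, hk⟩ := IsDiscreteValuationRing.associated_pow_irreducible hx'0 (key l hl)
  refine ⟨k, ?_⟩
  have hmap := hk.symm.map (Subring.inclusion (Vr_le_Vl S M hM l))
  rw [map_pow] at hmap
  have e1 : Subring.inclusion (Vr_le_Vl S M hM l) (Subring.inclusion (Vr_mono S M hM hl) π) =
      Subring.inclusion (Vr_le_Vl S M hM n) π := Subtype.ext rfl
  have e2 : Subring.inclusion (Vr_le_Vl S M hM l) (⟨(x : K), hxl⟩ : Vr S M hM l) = x :=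
    Subtype.ext rfl
  rwa [e1, e2] at hmap

theorem exists_of_isDVR (h : IsDVR (Vl S M hM)) :
    ∃ n : ℕ, ∀ j : ℕ, (hnj : n ≤ j) →
      ¬ (Ideal.map (Subring.inclusion (S.strictMono.monotone hnj)) (Mn S M n) ≤
        (Mn S M j) ^ 2) := by
  by_contra hcon
  push_neg at hcon
  obtain ⟨hdom, hpid, hloc, hnf⟩ := h
  haveI := hdom; haveI := hpid; haveI := hloc
  obtain ⟨t, ht⟩ := (IsPrincipalIdealRing.principal
    (IsLocalRing.maximalIdeal (Vl S M hM))).principal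
  rw [Ideal.submodule_span_eq] at ht
  have ht0 : t ≠ 0 := by
    intro h0
    apply hnf
    rw [IsLocalRing.isField_iff_maximalIdeal_eq, ht, h0, Ideal.span_singleton_eq_bot]
  have htm : t ∈ IsLocalRing.maximalIdeal (Vl S M hM) := by
    rw [ht]
    exact Ideal.mem_span_singleton_self t
  obtain ⟨n₀, _, htn⟩ := exists_Vr_mem S M hM t.2 0
  have ht'_mem : (⟨(t : K), htn⟩ : Vr S M hM n₀) ∈ mVr S M hM n₀ := by
    apply mem_mVr_of_not_isUnit
    intro hu
    have := hu.map (Subring.inclusion (Vr_le_Vl S M hM n₀))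
    rw [show Subring.inclusion (Vr_le_Vl S M hM n₀) (⟨(t : K), htn⟩ : Vr S M hM n₀) = t
      from Subtype.ext rfl] at this
    exact (IsLocalRing.maximalIdeal.isMaximal (Vl S M hM)).ne_top
      ((IsLocalRing.maximalIdeal (Vl S M hM)).eq_top_of_isUnit_mem htm this)
  obtain ⟨j, hnj, hsq⟩ := hcon n₀
  have ht'' : Subring.inclusion (Vr_mono S M hM hnj) (⟨(t : K), htn⟩ : Vr S M hM n₀) ∈
      (mVr S M hM j) ^ 2 :=
    mVr_map_le_sq S M hM hnj hsq (Ideal.mem_map_of_mem _ ht'_mem)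
  obtain ⟨π, hπ_irr, hπ_span⟩ := exists_unif S M hM j
  rw [hπ_span, Ideal.span_singleton_pow, Ideal.mem_span_singleton] at ht''
  obtain ⟨r, hr⟩ := ht''
  have hπ_mem : π ∈ mVr S M hM j := hπ_span ▸ Ideal.mem_span_singleton_self π
  have hπV_nonunit := not_isUnit_Vl S M hM hπ_mem
  have hπV_mem : Subring.inclusion (Vr_le_Vl S M hM j) π ∈
      IsLocalRing.maximalIdeal (Vl S M hM) := by
    rw [IsLocalRing.mem_maximalIdeal]
    exact hπV_nonunit
  rw [ht, Ideal.mem_span_singleton] at hπV_mem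
  obtain ⟨s, hs⟩ := hπV_mem
  have hπ0 : (π : K) ≠ 0 := fun h0 => hπ_irr.ne_zero (Subtype.ext h0)
  have hK1 : (π : K) = (t : K) * (s : K) := by
    have := congrArg (Subtype.val : Vl S M hM → K) hs
    simpa using this
  have hK2 : (t : K) = (π : K) ^ 2 * (r : K) := by
    have := congrArg (Subtype.val : Vr S M hM j → K) hr
    simpa using this
  have hKu : (π : K) * ((r : K) * (s : K)) = 1 := by
    have h3 : (π : K) * ((π : K) * ((r : K) * (s : K))) = (π : K) * 1 := by
      rw [mul_one]
      nth_rewrite 3 [hK1]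
      rw [hK2]; ring
    exact (mul_left_cancel₀ hπ0 h3)
  apply hπV_nonunit
  refine IsUnit.of_mul_eq_one
    (Subring.inclusion (Vr_le_Vl S M hM j) r * s) ?_
  apply Subtype.ext
  simpa using hKu

end System

end DSysAux

/-- Let `D` be the limit of a system of Dedekind domains and `M` a
maximal ideal of `D`.  Then `D_M` is a DVR iff there exists `n` such that
`M ∩ Dₙ ⊄ (M ∩ Dⱼ)²` for all `j ≥ n`. -/
theorem DedekindSystem.localization_isDVR_iff {K : Type*} [Field K] (S : DedekindSystem K)
    (M : Ideal S.limit) (hM : M.IsMaximal) :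
    haveI := hM.isPrime
    (IsDVR (Localization.AtPrime M) ↔
      ∃ n : ℕ, ∀ j : ℕ, (hnj : n ≤ j) →
        ¬ (Ideal.map (Subring.inclusion (S.strictMono.monotone hnj))
              (Ideal.comap (Subring.inclusion (S.le_limit n)) M) ≤
            (Ideal.comap (Subring.inclusion (S.le_limit j)) M) ^ 2)) := by
  haveI := hM.isPrime
  letI : Algebra S.limit (DSysAux.Vl S M hM) := DSysAux.locAlg S.limit M hM.isPrime
  haveI : IsLocalization M.primeCompl (DSysAux.Vl S M hM) :=
    DSysAux.isLocalization S.limit M hM.isPrime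
  let e : Localization.AtPrime M ≃+* DSysAux.Vl S M hM :=
    (IsLocalization.algEquiv M.primeCompl (Localization.AtPrime M)
      (DSysAux.Vl S M hM)).toRingEquiv
  constructor
  · intro h
    exact DSysAux.exists_of_isDVR S M hM (DSysAux.isDVR_of_equiv e h)
  · rintro ⟨n, hn⟩
    have hdvr := DSysAux.dvr_Vl S M hM n hn
    haveI := hdvr
    exact DSysAux.isDVR_of_equiv e.symm
      ⟨inferInstance, hdvr.toIsPrincipalIdealRing, hdvr.toIsLocalRing,
        IsDiscreteValuationRing.not_isField (DSysAux.Vl S M hM)⟩
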